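/- Let R₂ be as defined, and let x = 2⌊φn⌋+2, y = 2⌊φ²n⌋+2 for some n ≥ 1. Then exactly one diagonal option of (x,y) belongs to R₂: there is exactly one i with 0 < i ≤ x such that (x−i, y−i) ∈ R₂. -/

import Mathlib

noncomputable def goldenPhi : ℝ := (1 + Real.sqrt 5) / 2

/-- The candidate set of P-positions of Blocking-2 Wythoff Nim. -/
def R2 : Set (ℕ × ℕ) :=
  {(0, 0)} ∪
  {p | ∃ n : ℕ, p = (n, 2 * n + 1) ∨ p = (2 * n + 1, n)} ∪
  {p | ∃ n : ℕ, p = (2 * ⌊goldenPhi * n⌋₊ + 2, 2 * ⌊goldenPhi ^ 2 * n⌋₊ + 2) ∨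
                p = (2 * ⌊goldenPhi ^ 2 * n⌋₊ + 2, 2 * ⌊goldenPhi * n⌋₊ + 2)}

lemma goldenPhi_sq : goldenPhi ^ 2 = goldenPhi + 1 := by
  have h5 : Real.sqrt 5 ^ 2 = 5 := Real.sq_sqrt (by norm_num)
  unfold goldenPhi
  nlinarith [h5]

lemma goldenPhi_one_le : (1 : ℝ) ≤ goldenPhi := by
  have h1 : (1 : ℝ) ≤ Real.sqrt 5 := by
    rw [show (1:ℝ) = Real.sqrt 1 by simp]
    exact Real.sqrt_le_sqrt (by norm_num)
  unfold goldenPhi; linarith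

lemma floor_goldenPhi_sq (n : ℕ) : ⌊goldenPhi ^ 2 * n⌋₊ = ⌊goldenPhi * n⌋₊ + n := by
  rw [goldenPhi_sq, show (goldenPhi + 1) * n = goldenPhi * n + n by ring]
  exact Nat.floor_add_natCast (mul_nonneg (by linarith [goldenPhi_one_le]) (Nat.cast_nonneg n)) n

lemma le_floor_goldenPhi (n : ℕ) : n ≤ ⌊goldenPhi * n⌋₊ := by
  apply Nat.le_floor
  calc (n : ℝ) = 1 * n := by ring
    _ ≤ goldenPhi * n := by
        exact mul_le_mul_of_nonneg_right goldenPhi_one_le (Nat.cast_nonneg n)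

/-- For x = 2⌊φn⌋+2, y = 2⌊φ²n⌋+2 with n ≥ 1, exactly one diagonal option of
(x,y) belongs to R₂. -/
theorem R2_diagonal_unique :
    ∀ n : ℕ, 1 ≤ n →
      ∃! i : ℕ, 0 < i ∧ i ≤ 2 * ⌊goldenPhi * n⌋₊ + 2 ∧
        (2 * ⌊goldenPhi * n⌋₊ + 2 - i, 2 * ⌊goldenPhi ^ 2 * n⌋₊ + 2 - i) ∈ R2 := by
  intro n hn
  set a := ⌊goldenPhi * n⌋₊ with ha
  have hb : ⌊goldenPhi ^ 2 * n⌋₊ = a + n := floor_goldenPhi_sq n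
  have han : n ≤ a := le_floor_goldenPhi n
  rw [hb]
  refine ⟨2 * (a - n) + 3, ⟨by omega, by omega, ?_⟩, ?_⟩
  · have hx : 2 * a + 2 - (2 * (a - n) + 3) = 2 * n - 1 := by omega
    have hy : 2 * (a + n) + 2 - (2 * (a - n) + 3) = 2 * (2 * n - 1) + 1 := by omega
    rw [hx, hy]
    exact Or.inl (Or.inr ⟨2 * n - 1, Or.inl rfl⟩)
  · rintro j ⟨hj0, hjx, hmem⟩
    rcases hmem with ((h | ⟨m, h | h⟩) | ⟨m, h | h⟩)
    · simp only [Set.mem_singleton_iff, Prod.ext_iff] at h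
      omega
    · simp only [Prod.ext_iff] at h
      omega
    · simp only [Prod.ext_iff] at h
      omega
    · simp only [Prod.ext_iff] at h
      have hbm := floor_goldenPhi_sq m
      rw [hbm] at h
      have hm : m = n := by omega
      subst hm
      rw [← ha] at h
      omega
    · simp only [Prod.ext_iff] at h
      have hbm := floor_goldenPhi_sq m
      rw [hbm] at h
      omega
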